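/- Let v_1, v_2, v_3, v_4 be pairwise transverse decorated Lagrangians in (ℝ^{2n}, ω) with underlying Lagrangians L_1, L_2, L_3, L_4. Then the matrix of the cross ratio [L_1, L_2, L_3, L_4] : L_1 → L_1 in the basis v_1 (with convention B(v_j) = Σ_i v_i [B]_{ij} for an endomorphism B of L_1) equals −Λ_{31}^{−1}Λ_{34}Λ_{14}^{−1}Λ_{12}Λ_{32}^{−1}Λ_{31}, and also equals −Λ_{41}^{−1}Λ_{43}Λ_{23}^{−1}Λ_{21}. -/

import Mathlib

open Matrix

noncomputable section

/-- The symplectic vector space `ℝ^{2n}`, with coordinates indexed by `Fin n ⊕ Fin n`. -/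
abbrev V2 (n : ℕ) : Type := (Fin n ⊕ Fin n) → ℝ

/-- The standard matrix `J = [[0, Id],[−Id, 0]]`. -/
def Jn (n : ℕ) : Matrix (Fin n ⊕ Fin n) (Fin n ⊕ Fin n) ℝ :=
  Matrix.fromBlocks 0 1 (-1) 0

/-- The standard symplectic form `ω(x,y) = ᵀx J y` on `ℝ^{2n}`. -/
def omegaForm (n : ℕ) (x y : V2 n) : ℝ := x ⬝ᵥ (Jn n).mulVec y

/-- A subspace is Lagrangian if it has dimension `n` and `ω` vanishes on it. -/
def IsLagrangian (n : ℕ) (L : Submodule ℝ (V2 n)) : Prop :=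
  Module.finrank ℝ L = n ∧ ∀ x ∈ L, ∀ y ∈ L, omegaForm n x y = 0

/-- Membership in `Sp(2n,ℝ)`: `ᵀg J g = J`. -/
def IsSymplectic (n : ℕ) (g : Matrix (Fin n ⊕ Fin n) (Fin n ⊕ Fin n) ℝ) : Prop :=
  gᵀ * Jn n * g = Jn n

/-- `φ : L → L'` is the map whose graph is `M`, i.e. `M = {e + φ e : e ∈ L}`. -/
def IsGraphMap (n : ℕ) (L M L' : Submodule ℝ (V2 n)) (φ : L →ₗ[ℝ] L') : Prop :=
  ∀ x : V2 n, x ∈ M ↔ ∃ e : L, x = (e : V2 n) + (φ e : V2 n)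

/-- A decorated Lagrangian: a basis `v` of a Lagrangian subspace of `ℝ^{2n}`. -/
def IsDecorated (n : ℕ) (v : Fin n → V2 n) : Prop :=
  LinearIndependent ℝ v ∧ IsLagrangian n (Submodule.span ℝ (Set.range v))

/-- The symplectic `Λ`-length of two decorated Lagrangians: `(Λ_{v,w})_{ij} = ω(v_i, w_j)`. -/
def LamM (n : ℕ) (v w : Fin n → V2 n) : Matrix (Fin n) (Fin n) ℝ :=
  fun i j => omegaForm n (v i) (w j)

/-- ω as a bilinear map in the left argument. -/
def omL (n : ℕ) (x : V2 n) : V2 n →ₗ[ℝ] ℝ where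
  toFun y := omegaForm n y x
  map_add' y z := by simp [omegaForm, add_dotProduct]
  map_smul' c y := by simp [omegaForm, smul_dotProduct]

def omR (n : ℕ) (x : V2 n) : V2 n →ₗ[ℝ] ℝ where
  toFun y := omegaForm n x y
  map_add' y z := by simp [omegaForm, mulVec_add, dotProduct_add]
  map_smul' c y := by simp [omegaForm, mulVec_smul, dotProduct_smul]

lemma omega_sum_right (n : ℕ) (x : V2 n) (c : Fin n → ℝ) (u : Fin n → V2 n) :
    omegaForm n x (∑ i, c i • u i) = ∑ i, c i * omegaForm n x (u i) := by
  have h := map_sum (omR n x) (fun i => c i • u i) Finset.univ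
  simp only [_root_.map_smul, smul_eq_mul] at h
  exact h

lemma omega_sum_left (n : ℕ) (x : V2 n) (c : Fin n → ℝ) (u : Fin n → V2 n) :
    omegaForm n (∑ i, c i • u i) x = ∑ i, c i * omegaForm n (u i) x := by
  have h := map_sum (omL n x) (fun i => c i • u i) Finset.univ
  simp only [_root_.map_smul, smul_eq_mul] at h
  exact h

lemma negJ_mul_J (n : ℕ) : (-(Jn n)) * Jn n = 1 := by
  simp [Jn, Matrix.fromBlocks_neg, Matrix.fromBlocks_multiply, ← Matrix.fromBlocks_one]

lemma omega_nondeg (n : ℕ) (x : V2 n) (h : ∀ y, omegaForm n y x = 0) : x = 0 := by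
  have hJ : (Jn n).mulVec x = 0 := by
    funext k
    have := h (Pi.single k 1)
    simpa [omegaForm, dotProduct, Pi.single_apply, Finset.sum_ite_eq'] using this
  calc x = ((-(Jn n)) * Jn n).mulVec x := by rw [negJ_mul_J]; simp
    _ = (-(Jn n)).mulVec ((Jn n).mulVec x) := by rw [← mulVec_mulVec]
    _ = 0 := by rw [hJ]; simp

lemma span_sup_top (n : ℕ) {v w : Fin n → V2 n} (hv : IsDecorated n v) (hw : IsDecorated n w)
    (hvw : Submodule.span ℝ (Set.range v) ⊓ Submodule.span ℝ (Set.range w) = ⊥) :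
    Submodule.span ℝ (Set.range v) ⊔ Submodule.span ℝ (Set.range w) = ⊤ := by
  apply Submodule.eq_top_of_finrank_eq
  have h := Submodule.finrank_sup_add_finrank_inf_eq (Submodule.span ℝ (Set.range v))
    (Submodule.span ℝ (Set.range w))
  rw [hvw] at h
  simp only [finrank_bot, add_zero] at h
  rw [h, hv.2.1, hw.2.1]
  simp [Module.finrank_pi]

lemma zero_of_pairings (n : ℕ) {v w : Fin n → V2 n} (hv : IsDecorated n v) (hw : IsDecorated n w)
    (hvw : Submodule.span ℝ (Set.range v) ⊓ Submodule.span ℝ (Set.range w) = ⊥)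
    (x : V2 n) (h1 : ∀ i, omegaForm n (v i) x = 0) (h2 : ∀ i, omegaForm n (w i) x = 0) :
    x = 0 := by
  apply omega_nondeg n x
  intro y
  have hy : y ∈ LinearMap.ker (omL n x) := by
    have htop := span_sup_top n hv hw hvw
    have hle : Submodule.span ℝ (Set.range v) ⊔ Submodule.span ℝ (Set.range w) ≤
        LinearMap.ker (omL n x) := by
      apply sup_le <;> rw [Submodule.span_le] <;> rintro _ ⟨i, rfl⟩
      · exact h1 i
      · exact h2 i
    rw [htop] at hle
    exact hle trivial
  exact hy

lemma omega_self_zero (n : ℕ) {v : Fin n → V2 n} (hv : IsDecorated n v) (i j : Fin n) :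
    omegaForm n (v i) (v j) = 0 :=
  hv.2.2 _ (Submodule.subset_span (Set.mem_range_self i)) _
    (Submodule.subset_span (Set.mem_range_self j))

lemma lam_anti (n : ℕ) (v w : Fin n → V2 n) : LamM n w v = -(LamM n v w)ᵀ := by
  ext i j
  have : omegaForm n (w i) (v j) = -omegaForm n (v j) (w i) := by
    simp only [omegaForm, dotProduct_mulVec]
    have hJ : (Jn n)ᵀ = -(Jn n) := by
      simp [Jn, Matrix.fromBlocks_transpose, Matrix.fromBlocks_neg]
    rw [dotProduct_comm]
    rw [show (w i) ᵥ* Jn n = (Jn n)ᵀ *ᵥ (w i) from by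
      rw [← Matrix.vecMul_transpose, Matrix.transpose_transpose]]
    rw [hJ]
    simp [Matrix.neg_mulVec, dotProduct_mulVec]
  simpa [LamM, Matrix.transpose_apply, Matrix.neg_apply] using this

lemma lam_det_isUnit (n : ℕ) {v w : Fin n → V2 n} (hv : IsDecorated n v) (hw : IsDecorated n w)
    (hvw : Submodule.span ℝ (Set.range v) ⊓ Submodule.span ℝ (Set.range w) = ⊥) :
    IsUnit (LamM n v w).det := by
  rw [isUnit_iff_ne_zero]
  intro hdet
  obtain ⟨c, hc0, hc⟩ := (Matrix.exists_mulVec_eq_zero_iff).2 hdet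
  set x := ∑ j, c j • w j with hx
  have hvx : ∀ i, omegaForm n (v i) x = 0 := by
    intro i
    rw [hx, omega_sum_right]
    have := congrFun hc i
    simp only [Matrix.mulVec, dotProduct, LamM, Pi.zero_apply] at this
    rw [← this]
    exact Finset.sum_congr rfl fun _ _ => mul_comm _ _
  have hwx : ∀ i, omegaForm n (w i) x = 0 := by
    intro i
    rw [hx, omega_sum_right]
    simp [omega_self_zero n hw]
  have hx0 : x = 0 := zero_of_pairings n hv hw hvw x hvx hwx
  apply hc0
  have := (Fintype.linearIndependent_iff.1 hw.1) c (by rw [← hx]; exact hx0)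
  funext j; exact this j

lemma mulVec_col (n : ℕ) (B C : Matrix (Fin n) (Fin n) ℝ) (j : Fin n) :
    (B *ᵥ fun k => C k j) = fun i => (B * C) i j := by
  funext i
  simp [Matrix.mulVec, Matrix.mul_apply, dotProduct]

lemma mem_span_expand (n : ℕ) {v w : Fin n → V2 n}
    (hdet : IsUnit (LamM n v w).det) (x : V2 n)
    (hx : x ∈ Submodule.span ℝ (Set.range w)) :
    x = ∑ i, ((LamM n v w)⁻¹ *ᵥ fun k => omegaForm n (v k) x) i • w i := by
  obtain ⟨d, hd⟩ := (Submodule.mem_span_range_iff_exists_fun ℝ).1 hx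
  have hpair : (fun k => omegaForm n (v k) x) = (LamM n v w) *ᵥ d := by
    funext k
    rw [← hd, omega_sum_right]
    simp [Matrix.mulVec, dotProduct, LamM, mul_comm]
  rw [hpair, Matrix.mulVec_mulVec, Matrix.nonsing_inv_mul _ hdet]
  simpa using hd.symm

lemma omega_add_right (n : ℕ) (x y z : V2 n) :
    omegaForm n x (y + z) = omegaForm n x y + omegaForm n x z := map_add (omR n x) y z

lemma omega_sub_right (n : ℕ) (x y z : V2 n) :
    omegaForm n x (y - z) = omegaForm n x y - omegaForm n x z := map_sub (omR n x) y z

lemma omega_add_left (n : ℕ) (x y z : V2 n) :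
    omegaForm n (y + z) x = omegaForm n y x + omegaForm n z x := map_add (omL n x) y z

lemma double_expand (n : ℕ) {u v : Fin n → V2 n} (hu : IsDecorated n u) (hv : IsDecorated n v)
    (huv : Submodule.span ℝ (Set.range u) ⊓ Submodule.span ℝ (Set.range v) = ⊥)
    (hdetvu : IsUnit (LamM n v u).det) (hdetuv : IsUnit (LamM n u v).det) (x : V2 n) :
    x = (∑ i, ((LamM n v u)⁻¹ *ᵥ fun k => omegaForm n (v k) x) i • u i) +
        (∑ i, ((LamM n u v)⁻¹ *ᵥ fun k => omegaForm n (u k) x) i • v i) := by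
  set a : Fin n → ℝ := (LamM n v u)⁻¹ *ᵥ fun k => omegaForm n (v k) x with ha
  set b : Fin n → ℝ := (LamM n u v)⁻¹ *ᵥ fun k => omegaForm n (u k) x with hb
  set y : V2 n := x - ((∑ i, a i • u i) + (∑ i, b i • v i)) with hy
  have hyu : ∀ k, omegaForm n (u k) y = 0 := by
    intro k
    rw [hy, omega_sub_right, omega_add_right, omega_sum_right, omega_sum_right]
    have h1 : ∑ i, a i * omegaForm n (u k) (u i) = 0 := by
      simp [omega_self_zero n hu]
    have h2 : ∑ i, b i * omegaForm n (u k) (v i) = omegaForm n (u k) x := by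
      have : ∑ i, b i * omegaForm n (u k) (v i) = ((LamM n u v) *ᵥ b) k := by
        simp [Matrix.mulVec, dotProduct, LamM, mul_comm]
      rw [this, hb, Matrix.mulVec_mulVec, Matrix.mul_nonsing_inv _ hdetuv, Matrix.one_mulVec]
    rw [h1, h2]; ring
  have hyv : ∀ k, omegaForm n (v k) y = 0 := by
    intro k
    rw [hy, omega_sub_right, omega_add_right, omega_sum_right, omega_sum_right]
    have h1 : ∑ i, b i * omegaForm n (v k) (v i) = 0 := by
      simp [omega_self_zero n hv]
    have h2 : ∑ i, a i * omegaForm n (v k) (u i) = omegaForm n (v k) x := by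
      have : ∑ i, a i * omegaForm n (v k) (u i) = ((LamM n v u) *ᵥ a) k := by
        simp [Matrix.mulVec, dotProduct, LamM, mul_comm]
      rw [this, ha, Matrix.mulVec_mulVec, Matrix.mul_nonsing_inv _ hdetvu, Matrix.one_mulVec]
    rw [h1, h2]; ring
  have hy0 : y = 0 := zero_of_pairings n hu hv huv y hyu hyv
  exact sub_eq_zero.1 (hy.symm.trans hy0)

/-- If `u, v, w` are Lagrangian-decorated with `u ⋔ v`, then
`Λ_{vw}ᵀ (Λ_{vu}ᵀ)⁻¹ Λ_{uw} + Λ_{uw}ᵀ (Λ_{uv}ᵀ)⁻¹ Λ_{vw} = 0`. -/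
lemma lagrangian_relation (n : ℕ) {u v w : Fin n → V2 n} (hu : IsDecorated n u)
    (hv : IsDecorated n v) (hw : IsDecorated n w)
    (huv : Submodule.span ℝ (Set.range u) ⊓ Submodule.span ℝ (Set.range v) = ⊥)
    (hdetvu : IsUnit (LamM n v u).det) (hdetuv : IsUnit (LamM n u v).det) :
    (LamM n v w)ᵀ * ((LamM n v u)ᵀ)⁻¹ * (LamM n u w) +
      (LamM n u w)ᵀ * ((LamM n u v)ᵀ)⁻¹ * (LamM n v w) = 0 := by
  set A : Matrix (Fin n) (Fin n) ℝ := (LamM n v u)⁻¹ * (LamM n v w) with hA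
  set B : Matrix (Fin n) (Fin n) ℝ := (LamM n u v)⁻¹ * (LamM n u w) with hB
  have hexp : ∀ j, w j = (∑ i, A i j • u i) + (∑ i, B i j • v i) := by
    intro j
    have h := double_expand n hu hv huv hdetvu hdetuv (w j)
    rw [show ((LamM n v u)⁻¹ *ᵥ fun k => omegaForm n (v k) (w j)) = fun i => A i j from by
        rw [hA, show (fun k => omegaForm n (v k) (w j)) = fun k => (LamM n v w) k j from rfl,
          mulVec_col]] at h
    rw [show ((LamM n u v)⁻¹ *ᵥ fun k => omegaForm n (u k) (w j)) = fun i => B i j from by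
        rw [hB, show (fun k => omegaForm n (u k) (w j)) = fun k => (LamM n u w) k j from rfl,
          mulVec_col]] at h
    exact h
  have key : Aᵀ * (LamM n u v) * B + Bᵀ * (LamM n v u) * A = 0 := by
    ext i j
    have h0 : omegaForm n (w i) (w j) = 0 := omega_self_zero n hw i j
    rw [hexp i, hexp j, omega_add_left, omega_add_right, omega_add_right] at h0
    rw [omega_sum_left, omega_sum_left, omega_sum_left, omega_sum_left] at h0
    simp only [omega_sum_right] at h0
    have e1 : ∑ k, A k i * ∑ l, A l j * omegaForm n (u k) (u l) = 0 := by
      simp [omega_self_zero n hu]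
    have e2 : ∑ k, B k i * ∑ l, B l j * omegaForm n (v k) (v l) = 0 := by
      simp [omega_self_zero n hv]
    have e3 : ∑ k, A k i * ∑ l, B l j * omegaForm n (u k) (v l) =
        (Aᵀ * (LamM n u v) * B) i j := by
      simp only [Matrix.mul_apply, Matrix.transpose_apply, LamM, Finset.sum_mul,
        Finset.mul_sum]
      rw [Finset.sum_comm]
      exact Finset.sum_congr rfl fun k _ => Finset.sum_congr rfl fun l _ => by ring
    have e4 : ∑ k, B k i * ∑ l, A l j * omegaForm n (v k) (u l) =
        (Bᵀ * (LamM n v u) * A) i j := by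
      simp only [Matrix.mul_apply, Matrix.transpose_apply, LamM, Finset.sum_mul,
        Finset.mul_sum]
      rw [Finset.sum_comm]
      exact Finset.sum_congr rfl fun k _ => Finset.sum_congr rfl fun l _ => by ring
    simp only [Matrix.add_apply, Matrix.zero_apply]
    rw [← e3, ← e4]
    linarith [h0, e1, e2]
  have hAT : Aᵀ = (LamM n v w)ᵀ * ((LamM n v u)ᵀ)⁻¹ := by
    rw [hA, Matrix.transpose_mul, Matrix.transpose_nonsing_inv]
  have hBT : Bᵀ = (LamM n u w)ᵀ * ((LamM n u v)ᵀ)⁻¹ := by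
    rw [hB, Matrix.transpose_mul, Matrix.transpose_nonsing_inv]
  rw [hAT, hBT, hA, hB] at key
  rw [show (LamM n v w)ᵀ * ((LamM n v u)ᵀ)⁻¹ * LamM n u v * ((LamM n u v)⁻¹ * LamM n u w)
      = (LamM n v w)ᵀ * ((LamM n v u)ᵀ)⁻¹ * (LamM n u v * ((LamM n u v)⁻¹ * LamM n u w)) from by
    simp only [Matrix.mul_assoc], Matrix.mul_nonsing_inv_cancel_left _ _ hdetuv] at key
  rw [show (LamM n u w)ᵀ * ((LamM n u v)ᵀ)⁻¹ * LamM n v u * ((LamM n v u)⁻¹ * LamM n v w)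
      = (LamM n u w)ᵀ * ((LamM n u v)ᵀ)⁻¹ * (LamM n v u * ((LamM n v u)⁻¹ * LamM n v w)) from by
    simp only [Matrix.mul_assoc], Matrix.mul_nonsing_inv_cancel_left _ _ hdetvu] at key
  exact key

lemma graph_apply (n : ℕ) {va vb vc : Fin n → V2 n} (ha : IsDecorated n va)
    (hb : IsDecorated n vb) (hc : IsDecorated n vc)
    (hac : Submodule.span ℝ (Set.range va) ⊓ Submodule.span ℝ (Set.range vc) = ⊥)
    (hcb : Submodule.span ℝ (Set.range vc) ⊓ Submodule.span ℝ (Set.range vb) = ⊥)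
    (φ : Submodule.span ℝ (Set.range va) →ₗ[ℝ] Submodule.span ℝ (Set.range vc))
    (hφ : IsGraphMap n (Submodule.span ℝ (Set.range va)) (Submodule.span ℝ (Set.range vb))
      (Submodule.span ℝ (Set.range vc)) φ) (j : Fin n) :
    ((φ ⟨va j, Submodule.subset_span (Set.mem_range_self j)⟩ :
        ↥(Submodule.span ℝ (Set.range vc))) : V2 n) =
      ∑ i, ((LamM n va vc)⁻¹ * LamM n va vb * (LamM n vc vb)⁻¹ * LamM n vc va) i j • vc i := by
  have hdet_cb : IsUnit (LamM n vc vb).det := lam_det_isUnit n hc hb hcb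
  have hdet_ac : IsUnit (LamM n va vc).det := lam_det_isUnit n ha hc hac
  set e : ↥(Submodule.span ℝ (Set.range va)) :=
    ⟨va j, Submodule.subset_span (Set.mem_range_self j)⟩ with he
  set uu : V2 n := ((φ e : ↥(Submodule.span ℝ (Set.range vc))) : V2 n) with hu
  have huc : uu ∈ Submodule.span ℝ (Set.range vc) := (φ e).2
  have hp : va j + uu ∈ Submodule.span ℝ (Set.range vb) := (hφ _).2 ⟨e, rfl⟩
  have hcp : (fun k => omegaForm n (vc k) (va j + uu)) = fun k => LamM n vc va k j := by
    funext k
    rw [omega_add_right, hc.2.2 _ (Submodule.subset_span (Set.mem_range_self k)) _ huc,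
      add_zero]
    rfl
  have hpexp := mem_span_expand n hdet_cb (va j + uu) hp
  rw [hcp] at hpexp
  set cvec : Fin n → ℝ := (LamM n vc vb)⁻¹ *ᵥ fun k => LamM n vc va k j with hcv
  have hau : (fun k => omegaForm n (va k) uu) = (LamM n va vb) *ᵥ cvec := by
    funext k
    have h1 : uu = (va j + uu) - va j := by abel
    rw [h1, omega_sub_right, omega_self_zero n ha, sub_zero, hpexp, omega_sum_right]
    simp [Matrix.mulVec, dotProduct, LamM, mul_comm]
  have huexp := mem_span_expand n hdet_ac uu huc
  rw [hau, Matrix.mulVec_mulVec, hcv, Matrix.mulVec_mulVec] at huexp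
  rw [show (((LamM n va vc)⁻¹ * LamM n va vb * (LamM n vc vb)⁻¹) *ᵥ (fun k => LamM n vc va k j))
      = fun i => ((LamM n va vc)⁻¹ * LamM n va vb * (LamM n vc vb)⁻¹ * LamM n vc va) i j from
    mulVec_col n _ _ j] at huexp
  exact huexp


lemma inv_neg_of (n : ℕ) (A : Matrix (Fin n) (Fin n) ℝ) (h : IsUnit A.det) :
    (-A)⁻¹ = -A⁻¹ :=
  Matrix.inv_eq_left_inv (by rw [Matrix.neg_mul, Matrix.mul_neg, neg_neg,
    Matrix.nonsing_inv_mul _ h])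


/-- The matrix of the cross ratio `[L1,L2,L3,L4] = −(L4)_{L3→L1} ∘ (L2)_{L1→L3}` in the
basis `v1` equals `−Λ31⁻¹Λ34Λ14⁻¹Λ12Λ32⁻¹Λ31 = −Λ41⁻¹Λ43Λ23⁻¹Λ21`. -/
theorem cross_ratio_matrix_via_lambda_lengths (n : ℕ) (v1 v2 v3 v4 : Fin n → V2 n)
    (h1 : IsDecorated n v1) (h2 : IsDecorated n v2)
    (h3 : IsDecorated n v3) (h4 : IsDecorated n v4)
    (h12 : Submodule.span ℝ (Set.range v1) ⊓ Submodule.span ℝ (Set.range v2) = ⊥)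
    (h13 : Submodule.span ℝ (Set.range v1) ⊓ Submodule.span ℝ (Set.range v3) = ⊥)
    (h14 : Submodule.span ℝ (Set.range v1) ⊓ Submodule.span ℝ (Set.range v4) = ⊥)
    (h23 : Submodule.span ℝ (Set.range v2) ⊓ Submodule.span ℝ (Set.range v3) = ⊥)
    (h24 : Submodule.span ℝ (Set.range v2) ⊓ Submodule.span ℝ (Set.range v4) = ⊥)
    (h34 : Submodule.span ℝ (Set.range v3) ⊓ Submodule.span ℝ (Set.range v4) = ⊥) :
    -(((LamM n v3 v1)⁻¹ * LamM n v3 v4 * (LamM n v1 v4)⁻¹ * LamM n v1 v2 *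
        (LamM n v3 v2)⁻¹ * LamM n v3 v1)) =
      -((LamM n v4 v1)⁻¹ * LamM n v4 v3 * (LamM n v2 v3)⁻¹ * LamM n v2 v1) ∧
    ∀ (φ : Submodule.span ℝ (Set.range v1) →ₗ[ℝ] Submodule.span ℝ (Set.range v3))
      (ψ : Submodule.span ℝ (Set.range v3) →ₗ[ℝ] Submodule.span ℝ (Set.range v1)),
      IsGraphMap n (Submodule.span ℝ (Set.range v1)) (Submodule.span ℝ (Set.range v2))
        (Submodule.span ℝ (Set.range v3)) φ →
      IsGraphMap n (Submodule.span ℝ (Set.range v3)) (Submodule.span ℝ (Set.range v4))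
        (Submodule.span ℝ (Set.range v1)) ψ →
      ∀ j : Fin n,
        ((ψ (φ ⟨v1 j, Submodule.subset_span (Set.mem_range_self j)⟩) :
            ↥(Submodule.span ℝ (Set.range v1))) : V2 n) =
          -∑ i, (-(((LamM n v3 v1)⁻¹ * LamM n v3 v4 * (LamM n v1 v4)⁻¹ * LamM n v1 v2 *
              (LamM n v3 v2)⁻¹ * LamM n v3 v1))) i j • v1 i := by
  have h31 : Submodule.span ℝ (Set.range v3) ⊓ Submodule.span ℝ (Set.range v1) = ⊥ := by
    rwa [inf_comm] at h13
  have h32 : Submodule.span ℝ (Set.range v3) ⊓ Submodule.span ℝ (Set.range v2) = ⊥ := by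
    rwa [inf_comm] at h23
  set A := LamM n v3 v1 with hA
  set B := LamM n v3 v4 with hB
  set C := LamM n v1 v4 with hC
  set D := LamM n v1 v2 with hD
  set E := LamM n v3 v2 with hE
  have dA : IsUnit A.det := lam_det_isUnit n h3 h1 h31
  have dAT : IsUnit (Aᵀ).det := by rwa [Matrix.det_transpose]
  have d13 : IsUnit (LamM n v1 v3).det := lam_det_isUnit n h1 h3 h13
  have dC : IsUnit C.det := lam_det_isUnit n h1 h4 h14
  have dCT : IsUnit (Cᵀ).det := by rwa [Matrix.det_transpose]
  have dE : IsUnit E.det := lam_det_isUnit n h3 h2 h32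
  have dET : IsUnit (Eᵀ).det := by rwa [Matrix.det_transpose]
  have hT13 : (LamM n v1 v3)ᵀ = -A := by rw [hA, lam_anti n v1 v3, neg_neg]
  have h41 : LamM n v4 v1 = -Cᵀ := by rw [hC, lam_anti n v1 v4]
  have h43 : LamM n v4 v3 = -Bᵀ := by rw [hB, lam_anti n v3 v4]
  have h23' : LamM n v2 v3 = -Eᵀ := by rw [hE, lam_anti n v3 v2]
  have h21 : LamM n v2 v1 = -Dᵀ := by rw [hD, lam_anti n v1 v2]
  have R4 := lagrangian_relation n h1 h3 h4 h13 dA d13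
  have R2 := lagrangian_relation n h1 h3 h2 h13 dA d13
  rw [hT13, inv_neg_of n A dA] at R4 R2
  have R4' : Bᵀ * ((Aᵀ)⁻¹ * C) = Cᵀ * (A⁻¹ * B) := by
    have h := R4
    simp only [Matrix.mul_neg, Matrix.neg_mul, Matrix.mul_assoc] at h
    rwa [add_neg_eq_zero] at h
  have R2' : Eᵀ * ((Aᵀ)⁻¹ * D) = Dᵀ * (A⁻¹ * E) := by
    have h := R2
    simp only [Matrix.mul_neg, Matrix.neg_mul, Matrix.mul_assoc] at h
    rwa [add_neg_eq_zero] at h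
  have e1 : A⁻¹ * (B * C⁻¹) = Cᵀ⁻¹ * (Bᵀ * Aᵀ⁻¹) := by
    have h := congrArg (fun X => Cᵀ⁻¹ * (X * C⁻¹)) R4'
    simp only [Matrix.mul_assoc] at h
    rw [Matrix.mul_nonsing_inv _ dC, Matrix.mul_one,
      Matrix.nonsing_inv_mul_cancel_left _ _ dCT] at h
    exact h.symm
  have e2 : Aᵀ⁻¹ * (D * (E⁻¹ * A)) = Eᵀ⁻¹ * Dᵀ := by
    have h := congrArg (fun X => Eᵀ⁻¹ * (X * (E⁻¹ * A))) R2'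
    simp only [Matrix.mul_assoc] at h
    rw [Matrix.nonsing_inv_mul_cancel_left _ _ dET,
      Matrix.mul_nonsing_inv_cancel_left _ _ dE, Matrix.nonsing_inv_mul _ dA,
      Matrix.mul_one] at h
    exact h
  have key1 : A⁻¹ * B * C⁻¹ * D * E⁻¹ * A = Cᵀ⁻¹ * Bᵀ * Eᵀ⁻¹ * Dᵀ := by
    calc A⁻¹ * B * C⁻¹ * D * E⁻¹ * A
        = (A⁻¹ * (B * C⁻¹)) * (D * (E⁻¹ * A)) := by simp only [Matrix.mul_assoc]
      _ = (Cᵀ⁻¹ * (Bᵀ * Aᵀ⁻¹)) * (D * (E⁻¹ * A)) := by rw [e1]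
      _ = Cᵀ⁻¹ * (Bᵀ * (Aᵀ⁻¹ * (D * (E⁻¹ * A)))) := by simp only [Matrix.mul_assoc]
      _ = Cᵀ⁻¹ * (Bᵀ * (Eᵀ⁻¹ * Dᵀ)) := by rw [e2]
      _ = Cᵀ⁻¹ * Bᵀ * Eᵀ⁻¹ * Dᵀ := by simp only [Matrix.mul_assoc]
  constructor
  · rw [h41, h43, h23', h21, inv_neg_of n Cᵀ dCT, inv_neg_of n Eᵀ dET]
    simp only [Matrix.mul_neg, Matrix.neg_mul, neg_neg]
    rw [key1]
  · intro φ ψ hφ hψ j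
    have hAmf := graph_apply n h1 h2 h3 h13 h32 φ hφ
    have hBmf := graph_apply n h3 h4 h1 h31 h14 ψ hψ
    set Am := (LamM n v1 v3)⁻¹ * LamM n v1 v2 * (LamM n v3 v2)⁻¹ * LamM n v3 v1 with hAm'
    set Bm := (LamM n v3 v1)⁻¹ * LamM n v3 v4 * (LamM n v1 v4)⁻¹ * LamM n v1 v3 with hBm'
    have hphie : φ ⟨v1 j, Submodule.subset_span (Set.mem_range_self j)⟩ =
        ∑ i, Am i j • (⟨v3 i, Submodule.subset_span (Set.mem_range_self i)⟩ :
          ↥(Submodule.span ℝ (Set.range v3))) := by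
      have hc : ((φ ⟨v1 j, Submodule.subset_span (Set.mem_range_self j)⟩ :
          ↥(Submodule.span ℝ (Set.range v3))) : V2 n) =
          ((∑ i, Am i j • (⟨v3 i, Submodule.subset_span (Set.mem_range_self i)⟩ :
            ↥(Submodule.span ℝ (Set.range v3))) : ↥(Submodule.span ℝ (Set.range v3))) : V2 n) := by
        rw [hAmf j]
        simp
      exact Subtype.coe_injective hc
    have hpsi : ∀ y : ↥(Submodule.span ℝ (Set.range v3)), ((ψ y :
        ↥(Submodule.span ℝ (Set.range v1))) : V2 n) =
        ((Submodule.span ℝ (Set.range v1)).subtype ∘ₗ ψ) y := fun y => rfl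
    rw [hpsi, hphie, map_sum]
    simp only [_root_.map_smul]
    have hstep : ∀ i, ((Submodule.span ℝ (Set.range v1)).subtype ∘ₗ ψ)
        ⟨v3 i, Submodule.subset_span (Set.mem_range_self i)⟩ = ∑ k, Bm k i • v1 k :=
      fun i => hBmf i
    simp only [hstep]
    have hBA : Bm * Am = A⁻¹ * B * C⁻¹ * D * E⁻¹ * A := by
      calc Bm * Am
          = A⁻¹ * (B * (C⁻¹ * (LamM n v1 v3 * ((LamM n v1 v3)⁻¹ * (D * (E⁻¹ * A)))))) := by
            rw [hAm', hBm']
            simp only [Matrix.mul_assoc]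
            rfl
        _ = A⁻¹ * (B * (C⁻¹ * (D * (E⁻¹ * A)))) := by
            rw [Matrix.mul_nonsing_inv_cancel_left _ _ d13]
        _ = A⁻¹ * B * C⁻¹ * D * E⁻¹ * A := by simp only [Matrix.mul_assoc]
    calc ∑ i, Am i j • ∑ k, Bm k i • v1 k
        = ∑ i, ∑ k, (Bm k i * Am i j) • v1 k := by
          simp only [Finset.smul_sum, smul_smul]
          exact Finset.sum_congr rfl fun i _ => Finset.sum_congr rfl fun k _ => by
            rw [mul_comm]
      _ = ∑ k, ∑ i, (Bm k i * Am i j) • v1 k := Finset.sum_comm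
      _ = ∑ k, (Bm * Am) k j • v1 k := by
          refine Finset.sum_congr rfl fun k _ => ?_
          rw [← Finset.sum_smul, Matrix.mul_apply]
      _ = -∑ i, (-(A⁻¹ * B * C⁻¹ * D * E⁻¹ * A)) i j • v1 i := by
          rw [hBA]
          simp [Matrix.neg_apply]
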